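/- Let g be in Monge form with k₁ ≠ k₂ as above. The origin is a first order ridge point relative to the principal vector v₁ (i.e. v₁κ₁(0) = 0 and v₁²κ₁(0) ≠ 0, where v₁ is the unit principal vector field with v₁(0) = ∂/∂u) if and only if a₃₀ = 0 and 3a₂₁² + (a₄₀ − 3k₁³)(k₁ − k₂) ≠ 0. -/

import Mathlib

noncomputable section

/-- Partial derivative in the first variable. -/
def pdu (f : ℝ × ℝ → ℝ) (p : ℝ × ℝ) : ℝ := fderiv ℝ f p (1, 0)

/-- Partial derivative in the second variable. -/
def pdv (f : ℝ × ℝ → ℝ) (p : ℝ × ℝ) : ℝ := fderiv ℝ f p (0, 1)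

/-- Coefficient `E` of the first fundamental form of the Monge surface `(u,v,f(u,v))`. -/
def Ee (f : ℝ × ℝ → ℝ) (p : ℝ × ℝ) : ℝ := 1 + (pdu f p) ^ 2

/-- Coefficient `F` of the first fundamental form. -/
def Ff (f : ℝ × ℝ → ℝ) (p : ℝ × ℝ) : ℝ := pdu f p * pdv f p

/-- Coefficient `G` of the first fundamental form. -/
def Gg (f : ℝ × ℝ → ℝ) (p : ℝ × ℝ) : ℝ := 1 + (pdv f p) ^ 2

/-- Coefficient `L` of the second fundamental form. -/
def Ll (f : ℝ × ℝ → ℝ) (p : ℝ × ℝ) : ℝ :=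
  pdu (pdu f) p / Real.sqrt (1 + (pdu f p) ^ 2 + (pdv f p) ^ 2)

/-- Coefficient `M` of the second fundamental form. -/
def Mm (f : ℝ × ℝ → ℝ) (p : ℝ × ℝ) : ℝ :=
  pdv (pdu f) p / Real.sqrt (1 + (pdu f p) ^ 2 + (pdv f p) ^ 2)

/-- Coefficient `N` of the second fundamental form. -/
def Nn (f : ℝ × ℝ → ℝ) (p : ℝ × ℝ) : ℝ :=
  pdv (pdv f) p / Real.sqrt (1 + (pdu f p) ^ 2 + (pdv f p) ^ 2)

/-- `κ p` is a principal curvature of the Monge surface `(u,v,f(u,v))` at `p`: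
it is a root of the characteristic equation
`(EG-F²)κ² - (EN-2FM+GL)κ + (LN-M²) = 0`. -/
def IsPrincipalCurvature (f : ℝ × ℝ → ℝ) (κ : ℝ × ℝ → ℝ) (p : ℝ × ℝ) : Prop :=
  (Ee f p * Gg f p - Ff f p ^ 2) * κ p ^ 2
    - (Ee f p * Nn f p - 2 * Ff f p * Mm f p + Gg f p * Ll f p) * κ p
    + (Ll f p * Nn f p - Mm f p ^ 2) = 0

/-- `w` is a unit principal vector field for the principal curvature function `κ`:
`II·w = κ I·w` and `w` has unit length with respect to the first fundamental form. -/
def IsPrincipalField (f : ℝ × ℝ → ℝ) (κ : ℝ × ℝ → ℝ) (w : ℝ × ℝ → ℝ × ℝ)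
    (p : ℝ × ℝ) : Prop :=
  Ll f p * (w p).1 + Mm f p * (w p).2 = κ p * (Ee f p * (w p).1 + Ff f p * (w p).2) ∧
  Mm f p * (w p).1 + Nn f p * (w p).2 = κ p * (Ff f p * (w p).1 + Gg f p * (w p).2) ∧
  Ee f p * (w p).1 ^ 2 + 2 * Ff f p * (w p).1 * (w p).2 + Gg f p * (w p).2 ^ 2 = 1

/-- Directional derivative of a function along a vector field. -/
def dirDeriv (w : ℝ × ℝ → ℝ × ℝ) (h : ℝ × ℝ → ℝ) (p : ℝ × ℝ) : ℝ :=
  fderiv ℝ h p (w p)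

/-! ### Auxiliary material -/

/-- The square root factor appearing in the second fundamental form. -/
def SS (f : ℝ × ℝ → ℝ) (p : ℝ × ℝ) : ℝ := Real.sqrt (1 + (pdu f p) ^ 2 + (pdv f p) ^ 2)

/-- Its inverse. -/
def SI (f : ℝ × ℝ → ℝ) (p : ℝ × ℝ) : ℝ := (SS f p)⁻¹

section rules
variable {g h : ℝ × ℝ → ℝ} {p : ℝ × ℝ} {c : ℝ}

lemma pdu_add (hg : DifferentiableAt ℝ g p) (hh : DifferentiableAt ℝ h p) :
    pdu (fun q => g q + h q) p = pdu g p + pdu h p := by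
  simp only [pdu]; rw [fderiv_fun_add hg hh]; rfl

lemma pdu_sub (hg : DifferentiableAt ℝ g p) (hh : DifferentiableAt ℝ h p) :
    pdu (fun q => g q - h q) p = pdu g p - pdu h p := by
  simp only [pdu]; rw [fderiv_fun_sub hg hh]; rfl

lemma pdu_mul (hg : DifferentiableAt ℝ g p) (hh : DifferentiableAt ℝ h p) :
    pdu (fun q => g q * h q) p = pdu g p * h p + g p * pdu h p := by
  simp only [pdu]; rw [fderiv_fun_mul hg hh]; simp; ring

lemma pdu_const : pdu (fun _ => c) p = 0 := by simp [pdu]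

lemma pdu_sq (hg : DifferentiableAt ℝ g p) :
    pdu (fun q => g q ^ 2) p = 2 * g p * pdu g p := by
  have e : (fun q => g q ^ 2) = fun q => g q * g q := by funext q; ring
  rw [e, pdu_mul hg hg]; ring

lemma pdu_const_mul (hg : DifferentiableAt ℝ g p) :
    pdu (fun q => c * g q) p = c * pdu g p := by
  simp only [pdu]; rw [fderiv_const_mul hg]; rfl

lemma pdu_neg (hg : DifferentiableAt ℝ g p) :
    pdu (fun q => -g q) p = -pdu g p := by
  simp only [pdu]; rw [fderiv_fun_neg]; rfl

lemma pdu_inv (hg : DifferentiableAt ℝ g p) (hz : g p ≠ 0) :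
    pdu (fun q => (g q)⁻¹) p = -pdu g p * ((g p) ^ 2)⁻¹ := by
  have e := ((hasDerivAt_inv hz).comp_hasFDerivAt p hg.hasFDerivAt).fderiv
  simp only [pdu]
  rw [show (fun q => (g q)⁻¹) = (fun x => x⁻¹) ∘ g from rfl, e]
  simp; ring

lemma pdu_sqrt (hg : DifferentiableAt ℝ g p) (hz : 0 < g p) :
    pdu (fun q => Real.sqrt (g q)) p = pdu g p * (2 * Real.sqrt (g p))⁻¹ := by
  have e := ((Real.hasDerivAt_sqrt hz.ne').comp_hasFDerivAt p hg.hasFDerivAt).fderiv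
  simp only [pdu]
  rw [show (fun q => Real.sqrt (g q)) = Real.sqrt ∘ g from rfl, e]
  simp [div_eq_mul_inv]; ring

lemma pdv_add (hg : DifferentiableAt ℝ g p) (hh : DifferentiableAt ℝ h p) :
    pdv (fun q => g q + h q) p = pdv g p + pdv h p := by
  simp only [pdv]; rw [fderiv_fun_add hg hh]; rfl

lemma pdv_sub (hg : DifferentiableAt ℝ g p) (hh : DifferentiableAt ℝ h p) :
    pdv (fun q => g q - h q) p = pdv g p - pdv h p := by
  simp only [pdv]; rw [fderiv_fun_sub hg hh]; rfl

lemma pdv_mul (hg : DifferentiableAt ℝ g p) (hh : DifferentiableAt ℝ h p) :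
    pdv (fun q => g q * h q) p = pdv g p * h p + g p * pdv h p := by
  simp only [pdv]; rw [fderiv_fun_mul hg hh]; simp; ring

lemma pdv_const : pdv (fun _ => c) p = 0 := by simp [pdv]

lemma pdv_sq (hg : DifferentiableAt ℝ g p) :
    pdv (fun q => g q ^ 2) p = 2 * g p * pdv g p := by
  have e : (fun q => g q ^ 2) = fun q => g q * g q := by funext q; ring
  rw [e, pdv_mul hg hg]; ring

lemma pdv_const_mul (hg : DifferentiableAt ℝ g p) :
    pdv (fun q => c * g q) p = c * pdv g p := by
  simp only [pdv]; rw [fderiv_const_mul hg]; rfl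

lemma pdv_neg (hg : DifferentiableAt ℝ g p) :
    pdv (fun q => -g q) p = -pdv g p := by
  simp only [pdv]; rw [fderiv_fun_neg]; rfl

lemma pdv_inv (hg : DifferentiableAt ℝ g p) (hz : g p ≠ 0) :
    pdv (fun q => (g q)⁻¹) p = -pdv g p * ((g p) ^ 2)⁻¹ := by
  have e := ((hasDerivAt_inv hz).comp_hasFDerivAt p hg.hasFDerivAt).fderiv
  simp only [pdv]
  rw [show (fun q => (g q)⁻¹) = (fun x => x⁻¹) ∘ g from rfl, e]
  simp; ring

lemma pdv_sqrt (hg : DifferentiableAt ℝ g p) (hz : 0 < g p) :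
    pdv (fun q => Real.sqrt (g q)) p = pdv g p * (2 * Real.sqrt (g p))⁻¹ := by
  have e := ((Real.hasDerivAt_sqrt hz.ne').comp_hasFDerivAt p hg.hasFDerivAt).fderiv
  simp only [pdv]
  rw [show (fun q => Real.sqrt (g q)) = Real.sqrt ∘ g from rfl, e]
  simp [div_eq_mul_inv]; ring

lemma contDiff_pdu {g : ℝ × ℝ → ℝ} (hg : ContDiff ℝ (⊤ : ℕ∞) g) :
    ContDiff ℝ (⊤ : ℕ∞) (pdu g) :=
  (hg.fderiv_right (by norm_num)).clm_apply contDiff_const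

lemma contDiff_pdv {g : ℝ × ℝ → ℝ} (hg : ContDiff ℝ (⊤ : ℕ∞) g) :
    ContDiff ℝ (⊤ : ℕ∞) (pdv g) :=
  (hg.fderiv_right (by norm_num)).clm_apply contDiff_const

lemma pd_comm {g : ℝ × ℝ → ℝ} (hg : ContDiff ℝ (⊤ : ℕ∞) g) : pdu (pdv g) = pdv (pdu g) := by
  funext p
  have hd : ∀ y, HasFDerivAt g (fderiv ℝ g y) y := fun y =>
    (hg.differentiable (by simp)).differentiableAt.hasFDerivAt
  have hc : ContDiff ℝ (⊤ : ℕ∞) (fderiv ℝ g) := hg.fderiv_right (by norm_num)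
  have hd2 : DifferentiableAt ℝ (fderiv ℝ g) p :=
    (hc.differentiable (by simp)).differentiableAt
  have hsym := second_derivative_symmetric hd hd2.hasFDerivAt ((1:ℝ),(0:ℝ)) ((0:ℝ),(1:ℝ))
  have e1 : ∀ u z : ℝ × ℝ, fderiv ℝ (fun q => fderiv ℝ g q u) p z =
      (fderiv ℝ (fderiv ℝ g) p z) u := by
    intro u z
    rw [fderiv_clm_apply hd2 (differentiableAt_const u)]
    simp [fderiv_const]
  show fderiv ℝ (fun q => fderiv ℝ g q ((0:ℝ),(1:ℝ))) p (1,0)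
      = fderiv ℝ (fun q => fderiv ℝ g q ((1:ℝ),(0:ℝ))) p (0,1)
  rw [e1, e1]
  exact hsym

end rules

set_option maxHeartbeats 2000000 in
/-- The origin is a first order ridge point relative to the principal vector `v₁`
(`v₁κ₁(0) = 0`, `v₁²κ₁(0) ≠ 0`) iff `a₃₀ = 0` and
`3a₂₁² + (a₄₀ - 3k₁³)(k₁ - k₂) ≠ 0`. -/
theorem stmt10
    (f : ℝ × ℝ → ℝ) (hf : ContDiff ℝ (⊤ : ℕ∞) f)
    (k1 k2 a30 a21 a12 a03 a40 a31 a22 : ℝ) (hk : k1 ≠ k2)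
    (h00 : f 0 = 0) (h10 : pdu f 0 = 0) (h01 : pdv f 0 = 0)
    (h20 : pdu (pdu f) 0 = k1) (h11 : pdv (pdu f) 0 = 0) (h02 : pdv (pdv f) 0 = k2)
    (h30 : pdu (pdu (pdu f)) 0 = a30) (h21 : pdv (pdu (pdu f)) 0 = a21)
    (h12 : pdv (pdv (pdu f)) 0 = a12) (h03 : pdv (pdv (pdv f)) 0 = a03)
    (h40 : pdu (pdu (pdu (pdu f))) 0 = a40)
    (h31 : pdv (pdu (pdu (pdu f))) 0 = a31)
    (h22 : pdv (pdv (pdu (pdu f))) 0 = a22)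
    (κ : ℝ × ℝ → ℝ) (hκs : ContDiffAt ℝ (⊤ : ℕ∞) κ 0) (hκ0 : κ 0 = k1)
    (hκeig : ∀ᶠ p in nhds (0 : ℝ × ℝ), IsPrincipalCurvature f κ p)
    (w : ℝ × ℝ → ℝ × ℝ) (hws : ContDiffAt ℝ (⊤ : ℕ∞) w 0) (hw0 : w 0 = (1, 0))
    (hw : ∀ᶠ p in nhds (0 : ℝ × ℝ), IsPrincipalField f κ w p) :
    (dirDeriv w κ 0 = 0 ∧ dirDeriv w (dirDeriv w κ) 0 ≠ 0) ↔
      (a30 = 0 ∧ 3 * a21 ^ 2 + (a40 - 3 * k1 ^ 3) * (k1 - k2) ≠ 0) := by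
  have hk' : k1 - k2 ≠ 0 := sub_ne_zero.mpr hk
  -- smoothness of the jet functions
  have c10 : ContDiff ℝ (⊤:ℕ∞) (pdu f) := contDiff_pdu hf
  have c01 : ContDiff ℝ (⊤:ℕ∞) (pdv f) := contDiff_pdv hf
  have c20 : ContDiff ℝ (⊤:ℕ∞) (pdu (pdu f)) := contDiff_pdu c10
  have c11 : ContDiff ℝ (⊤:ℕ∞) (pdv (pdu f)) := contDiff_pdv c10
  have c02 : ContDiff ℝ (⊤:ℕ∞) (pdv (pdv f)) := contDiff_pdv c01
  have c30 : ContDiff ℝ (⊤:ℕ∞) (pdu (pdu (pdu f))) := contDiff_pdu c20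
  have c21 : ContDiff ℝ (⊤:ℕ∞) (pdv (pdu (pdu f))) := contDiff_pdv c20
  have c12 : ContDiff ℝ (⊤:ℕ∞) (pdv (pdv (pdu f))) := contDiff_pdv c11
  have DD : ∀ g : ℝ × ℝ → ℝ, ContDiff ℝ (⊤:ℕ∞) g → Differentiable ℝ g := fun g hg =>
    hg.differentiable (by simp)
  have d10 := DD _ c10; have d01 := DD _ c01
  have d20 := DD _ c20; have d11 := DD _ c11; have d02 := DD _ c02
  have d30 := DD _ c30; have d21 := DD _ c21; have d12 := DD _ c12
  -- symmetry of mixed partials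
  have s01 : pdu (pdv f) = pdv (pdu f) := pd_comm hf
  have s11 : pdu (pdv (pdu f)) = pdv (pdu (pdu f)) := pd_comm c10
  have s02 : pdu (pdv (pdv f)) = pdv (pdv (pdu f)) := by rw [pd_comm c01, s01]
  have s12 : pdu (pdv (pdv (pdu f))) = pdv (pdv (pdu (pdu f))) := by rw [pd_comm c11, s11]
  -- the square-root factor
  have hT : ∀ p : ℝ × ℝ, 0 < 1 + (pdu f p) ^ 2 + (pdv f p) ^ 2 := fun p => by positivity
  have hSS : SS f = fun q => Real.sqrt (1 + (pdu f q) ^ 2 + (pdv f q) ^ 2) := rfl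
  have hSI : SI f = fun q => (SS f q)⁻¹ := rfl
  have hSpos : ∀ p, 0 < SS f p := fun p => Real.sqrt_pos.mpr (hT p)
  have cS : ContDiff ℝ (⊤:ℕ∞) (SS f) := by
    rw [hSS]
    exact ((contDiff_const.add (c10.pow 2)).add (c01.pow 2)).sqrt (fun p => (hT p).ne')
  have cSI : ContDiff ℝ (⊤:ℕ∞) (SI f) := by
    rw [hSI]; exact cS.inv (fun p => (hSpos p).ne')
  have dS' := DD _ cS; have dSI' := DD _ cSI
  have cSu : ContDiff ℝ (⊤:ℕ∞) (pdu (SS f)) := contDiff_pdu cS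
  have cSIu : ContDiff ℝ (⊤:ℕ∞) (pdu (SI f)) := contDiff_pdu cSI
  have dSu' := DD _ cSu; have dSIu' := DD _ cSIu
  have vS : SS f 0 = 1 := by rw [hSS]; simp [h10, h01]
  have vSI : SI f 0 = 1 := by rw [hSI]; simp [vS]
  have dS : pdu (SS f) = fun p =>
      (pdu f p * pdu (pdu f) p + pdv f p * pdv (pdu f) p) * SI f p := by
    funext p
    rw [hSS, pdu_sqrt (by fun_prop) (hT p)]
    simp (disch := fun_prop) only [pdu_add, pdu_const, pdu_sq]
    rw [s01, show SI f p = (Real.sqrt (1 + (pdu f p) ^ 2 + (pdv f p) ^ 2))⁻¹ from rfl,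
      mul_inv]
    ring
  have dSI : pdu (SI f) = fun p => -(pdu (SS f) p) * SI f p ^ 2 := by
    funext p
    rw [hSI, pdu_inv (dS'.differentiableAt) (hSpos p).ne']
    show -pdu (SS f) p * ((SS f p) ^ 2)⁻¹ = -pdu (SS f) p * ((SS f p)⁻¹) ^ 2
    ring
  have vSu : pdu (SS f) 0 = 0 := by rw [dS]; simp [h10, h01]
  have vSIu : pdu (SI f) 0 = 0 := by rw [dSI]; simp [vSu]
  have vSv : pdv (SS f) 0 = 0 := by
    rw [hSS, pdv_sqrt (by fun_prop) (hT 0)]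
    simp (disch := fun_prop) only [pdv_add, pdv_const, pdv_sq]
    simp [h10, h01]
  have vSIv : pdv (SI f) 0 = 0 := by
    rw [hSI, pdv_inv (dS'.differentiableAt) (hSpos 0).ne']
    simp [vSv]
  have vSuu : pdu (pdu (SS f)) 0 = k1 ^ 2 := by
    rw [dS]
    simp (disch := fun_prop) only [pdu_add, pdu_mul]
    simp only [h10, h01, h11, h20, vSI, vSIu]
    ring
  have vSIuu : pdu (pdu (SI f)) 0 = -k1 ^ 2 := by
    rw [dSI]
    simp (disch := fun_prop) only [pdu_mul, pdu_neg, pdu_sq]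
    simp only [vSu, vSuu, vSI, vSIu]
    ring
  -- the fundamental form coefficients and their smoothness
  have eE : Ee f = fun p => 1 + (pdu f p) ^ 2 := rfl
  have eF : Ff f = fun p => pdu f p * pdv f p := rfl
  have eG : Gg f = fun p => 1 + (pdv f p) ^ 2 := rfl
  have eL : Ll f = fun p => pdu (pdu f) p * SI f p := by
    funext p
    show pdu (pdu f) p / SS f p = pdu (pdu f) p * (SS f p)⁻¹
    exact div_eq_mul_inv _ _
  have eM : Mm f = fun p => pdv (pdu f) p * SI f p := by
    funext p
    show pdv (pdu f) p / SS f p = pdv (pdu f) p * (SS f p)⁻¹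
    exact div_eq_mul_inv _ _
  have eN : Nn f = fun p => pdv (pdv f) p * SI f p := by
    funext p
    show pdv (pdv f) p / SS f p = pdv (pdv f) p * (SS f p)⁻¹
    exact div_eq_mul_inv _ _
  have cE : ContDiff ℝ (⊤:ℕ∞) (Ee f) := by rw [eE]; exact contDiff_const.add (c10.pow 2)
  have cF : ContDiff ℝ (⊤:ℕ∞) (Ff f) := by rw [eF]; exact c10.mul c01
  have cG : ContDiff ℝ (⊤:ℕ∞) (Gg f) := by rw [eG]; exact contDiff_const.add (c01.pow 2)
  have cL : ContDiff ℝ (⊤:ℕ∞) (Ll f) := by rw [eL]; exact c20.mul cSI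
  have cM : ContDiff ℝ (⊤:ℕ∞) (Mm f) := by rw [eM]; exact c11.mul cSI
  have cN : ContDiff ℝ (⊤:ℕ∞) (Nn f) := by rw [eN]; exact c02.mul cSI
  have dE' := DD _ cE; have dF' := DD _ cF; have dG' := DD _ cG
  have dL' := DD _ cL; have dM' := DD _ cM; have dN' := DD _ cN
  have dEu' := DD _ (contDiff_pdu cE); have dFu' := DD _ (contDiff_pdu cF)
  have dGu' := DD _ (contDiff_pdu cG); have dLu' := DD _ (contDiff_pdu cL)
  have dMu' := DD _ (contDiff_pdu cM); have dNu' := DD _ (contDiff_pdu cN)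
  -- values at the origin
  have vE : Ee f 0 = 1 := by rw [eE]; simp [h10]
  have vF : Ff f 0 = 0 := by rw [eF]; simp [h10]
  have vG : Gg f 0 = 1 := by rw [eG]; simp [h01]
  have vL : Ll f 0 = k1 := by rw [eL]; simp [h20, vSI]
  have vM : Mm f 0 = 0 := by rw [eM]; simp [h11]
  have vN : Nn f 0 = k2 := by rw [eN]; simp [h02, vSI]
  -- first u-derivatives as functions
  have dE : pdu (Ee f) = fun p => 2 * pdu f p * pdu (pdu f) p := by
    funext p
    rw [eE]
    simp (disch := fun_prop) only [pdu_add, pdu_const, pdu_sq]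
    ring
  have dF : pdu (Ff f) = fun p => pdu (pdu f) p * pdv f p + pdu f p * pdv (pdu f) p := by
    funext p
    rw [eF]
    simp (disch := fun_prop) only [pdu_mul]
    rw [s01]
  have dG : pdu (Gg f) = fun p => 2 * pdv f p * pdv (pdu f) p := by
    funext p
    rw [eG]
    simp (disch := fun_prop) only [pdu_add, pdu_const, pdu_sq]
    rw [s01]; ring
  have dL : pdu (Ll f) = fun p => pdu (pdu (pdu f)) p * SI f p + pdu (pdu f) p * pdu (SI f) p := by
    funext p
    rw [eL]
    simp (disch := fun_prop) only [pdu_mul]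
  have dM : pdu (Mm f) = fun p => pdv (pdu (pdu f)) p * SI f p + pdv (pdu f) p * pdu (SI f) p := by
    funext p
    rw [eM]
    simp (disch := fun_prop) only [pdu_mul]
    rw [s11]
  have dN : pdu (Nn f) = fun p => pdv (pdv (pdu f)) p * SI f p + pdv (pdv f) p * pdu (SI f) p := by
    funext p
    rw [eN]
    simp (disch := fun_prop) only [pdu_mul]
    rw [s02]
  -- first derivative values at the origin
  have vEu : pdu (Ee f) 0 = 0 := by rw [dE]; simp [h10]
  have vFu : pdu (Ff f) 0 = 0 := by rw [dF]; simp [h10, h01]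
  have vGu : pdu (Gg f) 0 = 0 := by rw [dG]; simp [h01]
  have vLu : pdu (Ll f) 0 = a30 := by rw [dL]; simp [h30, h20, vSI, vSIu]
  have vMu : pdu (Mm f) 0 = a21 := by rw [dM]; simp [h21, h11, vSI, vSIu]
  have vNu : pdu (Nn f) 0 = a12 := by rw [dN]; simp [h12, h02, vSI, vSIu]
  have vEv : pdv (Ee f) 0 = 0 := by
    rw [eE]
    simp (disch := fun_prop) only [pdv_add, pdv_const, pdv_sq]
    simp [h10]
  have vFv : pdv (Ff f) 0 = 0 := by
    rw [eF]
    simp (disch := fun_prop) only [pdv_mul]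
    simp [h10, h11]
  have vGv : pdv (Gg f) 0 = 0 := by
    rw [eG]
    simp (disch := fun_prop) only [pdv_add, pdv_const, pdv_sq]
    simp [h01]
  have vLv : pdv (Ll f) 0 = a21 := by
    rw [eL]
    simp (disch := fun_prop) only [pdv_mul]
    simp [h21, h20, vSI, vSIv]
  have vMv : pdv (Mm f) 0 = a12 := by
    rw [eM]
    simp (disch := fun_prop) only [pdv_mul]
    simp [h12, h11, vSI, vSIv]
  have vNv : pdv (Nn f) 0 = a03 := by
    rw [eN]
    simp (disch := fun_prop) only [pdv_mul]
    simp [h03, h02, vSI, vSIv]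
  -- second derivative values at the origin
  have vEuu : pdu (pdu (Ee f)) 0 = 2 * k1 ^ 2 := by
    rw [dE]
    simp (disch := fun_prop) only [pdu_mul, pdu_const_mul]
    simp only [h10, h20, h30]
    ring
  have vGuu : pdu (pdu (Gg f)) 0 = 0 := by
    rw [dG]
    simp (disch := fun_prop) only [pdu_mul, pdu_const_mul]
    simp only [h01, h11]
    ring
  have vLuu : pdu (pdu (Ll f)) 0 = a40 - k1 ^ 3 := by
    rw [dL]
    simp (disch := fun_prop) only [pdu_add, pdu_mul]
    simp only [h40, h30, h20, vSI, vSIu, vSIuu]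
    ring
  have vNuu : pdu (pdu (Nn f)) 0 = a22 - k1 ^ 2 * k2 := by
    rw [dN]
    simp (disch := fun_prop) only [pdu_add, pdu_mul]
    rw [s12]
    simp only [h22, h12, h02, vSI, vSIu, vSIuu]
    ring
  -- facts about κ and w
  have hκ3 : ContDiffAt ℝ 3 κ 0 := hκs.of_le (WithTop.coe_le_coe.mpr le_top)
  have hκd : DifferentiableAt ℝ κ 0 := hκ3.differentiableAt (by norm_num)
  have hκev : ∀ᶠ p in nhds (0 : ℝ × ℝ), DifferentiableAt ℝ κ p :=
    (hκ3.eventually (by simp)).mono fun p hp => hp.differentiableAt (by norm_num)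
  have hκf : ContDiffAt ℝ 1 (fderiv ℝ κ) 0 := hκ3.fderiv_right (by norm_num)
  have hκud : DifferentiableAt ℝ (pdu κ) 0 :=
    (hκf.clm_apply contDiffAt_const).differentiableAt (by norm_num)
  have hκvd : DifferentiableAt ℝ (pdv κ) 0 :=
    (hκf.clm_apply contDiffAt_const).differentiableAt (by norm_num)
  have hw3 : ContDiffAt ℝ 3 w 0 := hws.of_le (WithTop.coe_le_coe.mpr le_top)
  have hwd : DifferentiableAt ℝ w 0 := hw3.differentiableAt (by norm_num)
  have w1d : DifferentiableAt ℝ (fun p => (w p).1) 0 := hwd.fst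
  have w2d : DifferentiableAt ℝ (fun p => (w p).2) 0 := hwd.snd
  have hw01 : (w 0).1 = 1 := by rw [hw0]
  have hw02 : (w 0).2 = 0 := by rw [hw0]
  -- the characteristic equation
  have hP : (fun p => (Ee f p * Gg f p - Ff f p ^ 2) * κ p ^ 2
      - (Ee f p * Nn f p - 2 * Ff f p * Mm f p + Gg f p * Ll f p) * κ p
      + (Ll f p * Nn f p - Mm f p ^ 2)) =ᶠ[nhds (0 : ℝ × ℝ)] (fun _ => (0:ℝ)) :=
    hκeig.mono fun p hp => hp
  have hPufun : pdu (fun p => (Ee f p * Gg f p - Ff f p ^ 2) * κ p ^ 2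
      - (Ee f p * Nn f p - 2 * Ff f p * Mm f p + Gg f p * Ll f p) * κ p
      + (Ll f p * Nn f p - Mm f p ^ 2)) =ᶠ[nhds (0 : ℝ × ℝ)] (fun _ => (0:ℝ)) := by
    filter_upwards [hP.fderiv (𝕜 := ℝ)] with p hp
    show fderiv ℝ _ p (1,0) = (0:ℝ)
    rw [hp]
    simp
  have hPu0 : pdu (fun p => (Ee f p * Gg f p - Ff f p ^ 2) * κ p ^ 2
      - (Ee f p * Nn f p - 2 * Ff f p * Mm f p + Gg f p * Ll f p) * κ p
      + (Ll f p * Nn f p - Mm f p ^ 2)) 0 = 0 := hPufun.self_of_nhds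
  have hPv0 : pdv (fun p => (Ee f p * Gg f p - Ff f p ^ 2) * κ p ^ 2
      - (Ee f p * Nn f p - 2 * Ff f p * Mm f p + Gg f p * Ll f p) * κ p
      + (Ll f p * Nn f p - Mm f p ^ 2)) 0 = 0 := by
    show fderiv ℝ _ (0 : ℝ × ℝ) (0,1) = (0:ℝ)
    rw [hP.fderiv_eq]
    simp
  have hPuu0 : pdu (pdu (fun p => (Ee f p * Gg f p - Ff f p ^ 2) * κ p ^ 2
      - (Ee f p * Nn f p - 2 * Ff f p * Mm f p + Gg f p * Ll f p) * κ p
      + (Ll f p * Nn f p - Mm f p ^ 2))) 0 = 0 := by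
    show fderiv ℝ _ (0 : ℝ × ℝ) (1,0) = (0:ℝ)
    rw [hPufun.fderiv_eq]
    simp
  -- first derivative of the characteristic equation in the u-direction
  have EQ1 : pdu (fun p => (Ee f p * Gg f p - Ff f p ^ 2) * κ p ^ 2
      - (Ee f p * Nn f p - 2 * Ff f p * Mm f p + Gg f p * Ll f p) * κ p
      + (Ll f p * Nn f p - Mm f p ^ 2)) 0
      = (k1 - k2) * pdu κ 0 - (k1 - k2) * a30 := by
    simp (disch := fun_prop) only
      [pdu_add, pdu_sub, pdu_mul, pdu_sq, pdu_const_mul, pdu_const]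
    simp only [vE, vF, vG, vL, vM, vN, vEu, vFu, vGu, vLu, vMu, vNu, hκ0]
    ring
  have hκu : pdu κ 0 = a30 := by
    have h := EQ1.symm.trans hPu0
    have h2 : (k1 - k2) * pdu κ 0 = (k1 - k2) * a30 := by linarith
    exact mul_left_cancel₀ hk' h2
  -- first derivative in the v-direction
  have EQ2 : pdv (fun p => (Ee f p * Gg f p - Ff f p ^ 2) * κ p ^ 2
      - (Ee f p * Nn f p - 2 * Ff f p * Mm f p + Gg f p * Ll f p) * κ p
      + (Ll f p * Nn f p - Mm f p ^ 2)) 0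
      = (k1 - k2) * pdv κ 0 - (k1 - k2) * a21 := by
    simp (disch := fun_prop) only
      [pdv_add, pdv_sub, pdv_mul, pdv_sq, pdv_const_mul, pdv_const]
    simp only [vE, vF, vG, vL, vM, vN, vEv, vFv, vGv, vLv, vMv, vNv, hκ0]
    ring
  have hκv : pdv κ 0 = a21 := by
    have h := EQ2.symm.trans hPv0
    have h2 : (k1 - k2) * pdv κ 0 = (k1 - k2) * a21 := by linarith
    exact mul_left_cancel₀ hk' h2
  -- second derivative: express pdu of the characteristic function as an explicit function
  have hQ : pdu (fun p => (Ee f p * Gg f p - Ff f p ^ 2) * κ p ^ 2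
      - (Ee f p * Nn f p - 2 * Ff f p * Mm f p + Gg f p * Ll f p) * κ p
      + (Ll f p * Nn f p - Mm f p ^ 2)) =ᶠ[nhds (0 : ℝ × ℝ)]
      (fun p =>
        (pdu (Ee f) p * Gg f p + Ee f p * pdu (Gg f) p - 2 * Ff f p * pdu (Ff f) p) * κ p ^ 2
        + (Ee f p * Gg f p - Ff f p ^ 2) * (2 * κ p * pdu κ p)
        - ((pdu (Ee f) p * Nn f p + Ee f p * pdu (Nn f) p
            - 2 * (pdu (Ff f) p * Mm f p + Ff f p * pdu (Mm f) p)
            + pdu (Gg f) p * Ll f p + Gg f p * pdu (Ll f) p) * κ p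
          + (Ee f p * Nn f p - 2 * Ff f p * Mm f p + Gg f p * Ll f p) * pdu κ p)
        + (pdu (Ll f) p * Nn f p + Ll f p * pdu (Nn f) p - 2 * Mm f p * pdu (Mm f) p)) := by
    filter_upwards [hκev] with p hκp
    simp (disch := fun_prop) only
      [pdu_add, pdu_sub, pdu_mul, pdu_sq, pdu_const_mul, pdu_const]
    ring
  have hQ0 : pdu (fun p =>
        (pdu (Ee f) p * Gg f p + Ee f p * pdu (Gg f) p - 2 * Ff f p * pdu (Ff f) p) * κ p ^ 2
        + (Ee f p * Gg f p - Ff f p ^ 2) * (2 * κ p * pdu κ p)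
        - ((pdu (Ee f) p * Nn f p + Ee f p * pdu (Nn f) p
            - 2 * (pdu (Ff f) p * Mm f p + Ff f p * pdu (Mm f) p)
            + pdu (Gg f) p * Ll f p + Gg f p * pdu (Ll f) p) * κ p
          + (Ee f p * Nn f p - 2 * Ff f p * Mm f p + Gg f p * Ll f p) * pdu κ p)
        + (pdu (Ll f) p * Nn f p + Ll f p * pdu (Nn f) p - 2 * Mm f p * pdu (Mm f) p)) 0
      = 0 := by
    show fderiv ℝ _ (0 : ℝ × ℝ) (1,0) = (0:ℝ)
    rw [← hQ.fderiv_eq]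
    exact hPuu0
  have EQ3 : pdu (fun p =>
        (pdu (Ee f) p * Gg f p + Ee f p * pdu (Gg f) p - 2 * Ff f p * pdu (Ff f) p) * κ p ^ 2
        + (Ee f p * Gg f p - Ff f p ^ 2) * (2 * κ p * pdu κ p)
        - ((pdu (Ee f) p * Nn f p + Ee f p * pdu (Nn f) p
            - 2 * (pdu (Ff f) p * Mm f p + Ff f p * pdu (Mm f) p)
            + pdu (Gg f) p * Ll f p + Gg f p * pdu (Ll f) p) * κ p
          + (Ee f p * Nn f p - 2 * Ff f p * Mm f p + Gg f p * Ll f p) * pdu κ p)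
        + (pdu (Ll f) p * Nn f p + Ll f p * pdu (Nn f) p - 2 * Mm f p * pdu (Mm f) p)) 0
      = (k1 - k2) * pdu (pdu κ) 0
        + 3 * k1 ^ 4 - 3 * k1 ^ 3 * k2 - k1 * a40 + a40 * k2 - 2 * a21 ^ 2 := by
    simp (disch := fun_prop) only
      [pdu_add, pdu_sub, pdu_mul, pdu_sq, pdu_const_mul, pdu_const]
    simp only [vE, vF, vG, vL, vM, vN, vEu, vFu, vGu, vLu, vMu, vNu,
      vEuu, vGuu, vLuu, vNuu, hκ0, hκu]
    ring
  have hκuu : (k1 - k2) * pdu (pdu κ) 0 = 2 * a21 ^ 2 + (a40 - 3 * k1 ^ 3) * (k1 - k2) := by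
    have h := EQ3.symm.trans hQ0
    linear_combination h
  -- the principal field equations
  have hB : (fun p => Mm f p * (w p).1 + Nn f p * (w p).2
      - κ p * (Ff f p * (w p).1 + Gg f p * (w p).2)) =ᶠ[nhds (0 : ℝ × ℝ)] (fun _ => (0:ℝ)) :=
    hw.mono fun p hp => sub_eq_zero_of_eq hp.2.1
  have hBu0 : pdu (fun p => Mm f p * (w p).1 + Nn f p * (w p).2
      - κ p * (Ff f p * (w p).1 + Gg f p * (w p).2)) 0 = 0 := by
    show fderiv ℝ _ (0 : ℝ × ℝ) (1,0) = (0:ℝ)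
    rw [hB.fderiv_eq]
    simp
  have EQ4 : pdu (fun p => Mm f p * (w p).1 + Nn f p * (w p).2
      - κ p * (Ff f p * (w p).1 + Gg f p * (w p).2)) 0
      = a21 + k2 * pdu (fun p => (w p).2) 0 - k1 * pdu (fun p => (w p).2) 0 := by
    simp (disch := fun_prop) only [pdu_add, pdu_sub, pdu_mul]
    simp only [vM, vN, vF, vG, vMu, vNu, vFu, vGu, hκ0, hw01, hw02]
    ring
  have hW2u : (k1 - k2) * pdu (fun p => (w p).2) 0 = a21 := by
    have h := EQ4.symm.trans hBu0
    linear_combination -h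
  have hC : (fun p => Ee f p * (w p).1 ^ 2 + 2 * Ff f p * (w p).1 * (w p).2
      + Gg f p * (w p).2 ^ 2 - 1) =ᶠ[nhds (0 : ℝ × ℝ)] (fun _ => (0:ℝ)) :=
    hw.mono fun p hp => sub_eq_zero_of_eq hp.2.2
  have hCu0 : pdu (fun p => Ee f p * (w p).1 ^ 2 + 2 * Ff f p * (w p).1 * (w p).2
      + Gg f p * (w p).2 ^ 2 - 1) 0 = 0 := by
    show fderiv ℝ _ (0 : ℝ × ℝ) (1,0) = (0:ℝ)
    rw [hC.fderiv_eq]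
    simp
  have EQ5 : pdu (fun p => Ee f p * (w p).1 ^ 2 + 2 * Ff f p * (w p).1 * (w p).2
      + Gg f p * (w p).2 ^ 2 - 1) 0 = 2 * pdu (fun p => (w p).1) 0 := by
    simp (disch := fun_prop) only
      [pdu_add, pdu_sub, pdu_mul, pdu_sq, pdu_const_mul, pdu_const]
    simp only [vE, vF, vG, vEu, vFu, vGu, hw01, hw02]
    ring
  have hW1u : pdu (fun p => (w p).1) 0 = 0 := by
    have h := EQ5.symm.trans hCu0
    linarith
  -- conclusion: the two directional derivatives
  have hD1 : dirDeriv w κ 0 = a30 := by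
    show fderiv ℝ κ 0 (w 0) = a30
    rw [hw0]
    exact hκu
  have hdd : dirDeriv w κ = fun p => pdu κ p * (w p).1 + pdv κ p * (w p).2 := by
    funext p
    show fderiv ℝ κ p (w p) = _
    have hwp : w p = (w p).1 • ((1:ℝ),(0:ℝ)) + (w p).2 • ((0:ℝ),(1:ℝ)) := by
      apply Prod.ext <;> simp
    rw [hwp, map_add, (fderiv ℝ κ p).map_smul, (fderiv ℝ κ p).map_smul]
    simp only [pdu, pdv, smul_eq_mul, Prod.smul_mk, Prod.fst_add, Prod.snd_add,
      mul_one, mul_zero, add_zero, zero_add]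
    ring
  have hD2exp : dirDeriv w (dirDeriv w κ) 0
      = pdu (fun p => pdu κ p * (w p).1 + pdv κ p * (w p).2) 0 := by
    show fderiv ℝ (dirDeriv w κ) 0 (w 0) = _
    rw [hdd, hw0]
    rfl
  have EQ6 : pdu (fun p => pdu κ p * (w p).1 + pdv κ p * (w p).2) 0
      = pdu (pdu κ) 0 * (w 0).1 + pdu κ 0 * pdu (fun p => (w p).1) 0
        + pdu (pdv κ) 0 * (w 0).2 + pdv κ 0 * pdu (fun p => (w p).2) 0 := by
    simp (disch := fun_prop) only [pdu_add, pdu_mul]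
    ring
  have hD2 : (k1 - k2) * dirDeriv w (dirDeriv w κ) 0
      = 3 * a21 ^ 2 + (a40 - 3 * k1 ^ 3) * (k1 - k2) := by
    have h6 := hD2exp.trans EQ6
    rw [hw01, hw02, hW1u, hκv] at h6
    linear_combination (k1 - k2) * h6 + hκuu + a21 * hW2u
  constructor
  · rintro ⟨h1, h2⟩
    have ha : a30 = 0 := hD1.symm.trans h1
    refine ⟨ha, fun hR => h2 ?_⟩
    have hz : (k1 - k2) * dirDeriv w (dirDeriv w κ) 0 = 0 := by rw [hD2, hR]
    exact (mul_eq_zero.mp hz).resolve_left hk'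
  · rintro ⟨ha, hR⟩
    refine ⟨by rw [hD1, ha], fun hz => hR ?_⟩
    rw [← hD2, hz, mul_zero]
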